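/- arXiv:1304.4199 — 2 statements merged into one kernel-verified Lean document; each statement's English description precedes it below -/
import Mathlib

section
/- Consider the real-valued function h(λ) = ε(λ)·λ where ε(λ) = ((K-λ)β*)/(N² - N(K-λ-1)β*) on [1, K-1], with parameters N > 0, β* > 0, K ≥ 2 satisfying N > (K-1)β*. Then h is concave on [1, K-1]. -/
/-- The function `h(λ) = ε(λ)·λ` with `ε(λ) = (K-λ)β*/(N² - N(K-λ-1)β*)` is
concave on `[1, K-1]`, given `N > (K-1)β*`. -/
theorem stmt_5 (K : ℕ) (hK : 2 ≤ K) (N β : ℝ) (hN : 0 < N) (hβ : 0 < β)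
    (hload : ((K : ℝ) - 1) * β < N) :
    ConcaveOn ℝ (Set.Icc (1 : ℝ) ((K : ℝ) - 1))
      (fun lam : ℝ => (((K : ℝ) - lam) * β / (N ^ 2 - N * ((K : ℝ) - lam - 1) * β)) * lam) := by
  set A : ℝ := N * (N - ((K : ℝ) - 1) * β) with hA
  set B : ℝ := N * β with hB
  have hA0 : 0 < A := mul_pos hN (by linarith)
  have hB0 : 0 < B := mul_pos hN hβ
  set p : ℝ := β * ((K : ℝ) * B + A) / B ^ 2 with hp
  set q : ℝ := -β / B with hq
  set r : ℝ := -(p * A) with hr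
  have hp0 : 0 < p := by
    apply div_pos
    · apply mul_pos hβ
      have : (0:ℝ) < (K : ℝ) := by positivity
      nlinarith
    · positivity
  -- convexity of λ ↦ (A + B λ)⁻¹ on the interval
  have hinvIoi : ConvexOn ℝ (Set.Ioi (0:ℝ)) (fun x : ℝ => x⁻¹) := by
    have := convexOn_zpow (𝕜 := ℝ) (-1)
    simpa [zpow_neg] using this
  have hcomp := hinvIoi.comp_affineMap (AffineMap.lineMap (A : ℝ) (A + B))
  have hsub : Set.Icc (1 : ℝ) ((K : ℝ) - 1) ⊆
      (AffineMap.lineMap (A : ℝ) (A + B)) ⁻¹' Set.Ioi 0 := by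
    intro x hx
    simp only [Set.mem_preimage, AffineMap.lineMap_apply, Set.mem_Ioi, vsub_eq_sub,
      vadd_eq_add, smul_eq_mul]
    have h1 : 1 ≤ x := hx.1
    nlinarith
  have hinv : ConvexOn ℝ (Set.Icc (1 : ℝ) ((K : ℝ) - 1)) (fun lam : ℝ => (A + B * lam)⁻¹) := by
    refine ((hcomp.subset hsub (convex_Icc _ _)).congr ?_)
    intro x _
    simp only [Function.comp, AffineMap.lineMap_apply, vsub_eq_sub, vadd_eq_add, smul_eq_mul]
    ring_nf
  -- concave pieces
  have haff : ConcaveOn ℝ (Set.Icc (1 : ℝ) ((K : ℝ) - 1)) (fun lam : ℝ => p + q * lam) := by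
    refine ⟨convex_Icc _ _, fun x _ y _ a b _ _ hab => ?_⟩
    simp only [smul_eq_mul]
    nlinarith
  have hrinv : ConcaveOn ℝ (Set.Icc (1 : ℝ) ((K : ℝ) - 1))
      (fun lam : ℝ => r * (A + B * lam)⁻¹) := by
    have h1 : ConcaveOn ℝ (Set.Icc (1 : ℝ) ((K : ℝ) - 1))
        (fun lam : ℝ => -((A + B * lam)⁻¹)) := hinv.neg
    have h2 := h1.smul (c := -r) (by simp [hr]; positivity)
    refine h2.congr fun x _ => ?_
    simp only [Pi.smul_apply, smul_eq_mul]
    ring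
  have hsum := haff.add hrinv
  refine hsum.congr fun lam hlam => ?_
  have h1 : 1 ≤ lam := hlam.1
  have hD : 0 < A + B * lam := by nlinarith
  have hED : N ^ 2 - N * ((K : ℝ) - lam - 1) * β = A + B * lam := by rw [hA, hB]; ring
  simp only [Pi.add_apply]
  rw [hED, hr, hp, hq, hA, hB]
  have hD' : 0 < N * (N - ((K : ℝ) - 1) * β) + N * β * lam := by
    rw [hA, hB] at hD; exact hD
  have hD'' : N - β * ((K : ℝ) - 1) + β * lam ≠ 0 := ne_of_gt (by nlinarith)
  field_simp
  ring
end

section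
/- In the limit where K/N → 0 and c → 0, the optimal fraction λ*/K with λ* = (1 + N/c)(1 - √(1 - (K/N)·c/(c/N + 1))) tends to 1/2. -/
/-- In the iterated limit `N → ∞` then `c → 0⁺`, the optimal number of
non-cognitive transmitters `λ* = (1 + N/c)(1 - √(1 - (K/N) c/(c/N + 1)))`
tends to `K/2`. -/
theorem stmt_7 (K : ℝ) (hK : 0 < K) :
    ∃ Lim : ℝ → ℝ,
      (∀ c : ℝ, 0 < c →
        Filter.Tendsto
          (fun N : ℝ =>
            (1 + N / c) * (1 - Real.sqrt (1 - (K / N) * (c / (c / N + 1)))))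
          Filter.atTop (nhds (Lim c))) ∧
      Filter.Tendsto Lim (nhdsWithin 0 (Set.Ioi 0)) (nhds (K / 2)) := by
  refine ⟨fun _ => K / 2, fun c hc => ?_, tendsto_const_nhds⟩
  have h1 : Filter.Tendsto (fun N : ℝ => K * c / (c + N)) Filter.atTop (nhds 0) := by
    have h2 : Filter.Tendsto (fun N : ℝ => c + N) Filter.atTop Filter.atTop :=
      Filter.tendsto_atTop_add_const_left _ c Filter.tendsto_id
    simpa [div_eq_mul_inv] using h2.inv_tendsto_atTop.const_mul (K * c)
  have hs : Filter.Tendsto (fun N : ℝ => Real.sqrt (1 - K * c / (c + N)))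
      Filter.atTop (nhds 1) := by
    have h0 : Filter.Tendsto (fun N : ℝ => 1 - K * c / (c + N)) Filter.atTop (nhds 1) := by
      simpa using (tendsto_const_nhds (x := (1:ℝ)) (f := Filter.atTop)).sub h1
    simpa [Function.comp_def] using (Real.continuous_sqrt.tendsto 1).comp h0
  have h3 : Filter.Tendsto (fun N : ℝ => K / (1 + Real.sqrt (1 - K * c / (c + N))))
      Filter.atTop (nhds (K / 2)) := by
    have h0 : Filter.Tendsto (fun N : ℝ => 1 + Real.sqrt (1 - K * c / (c + N)))
        Filter.atTop (nhds 2) := by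
      have := (tendsto_const_nhds (x := (1:ℝ)) (f := Filter.atTop)).add hs
      norm_num at this
      exact this
    exact Filter.Tendsto.div (f := fun _ : ℝ => K) tendsto_const_nhds h0 (by norm_num)
  refine h3.congr' ?_
  filter_upwards [Filter.eventually_ge_atTop (max 1 (K * c))] with N hN
  have hN0 : (0:ℝ) < N := lt_of_lt_of_le one_pos ((le_max_left _ _).trans hN)
  have hcN : 0 < c + N := by linarith
  have hKc : K * c ≤ c + N := by
    have := (le_max_right 1 (K * c)).trans hN; linarith
  have hx1 : 0 ≤ 1 - K * c / (c + N) := by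
    rw [sub_nonneg, div_le_one hcN]; exact hKc
  set s := Real.sqrt (1 - K * c / (c + N)) with hsdef
  have hs0 : 0 ≤ s := Real.sqrt_nonneg _
  have hs2 : s ^ 2 = 1 - K * c / (c + N) := Real.sq_sqrt hx1
  have hs2' : (1 - s ^ 2) * (c + N) = K * c := by
    rw [hs2]; field_simp; ring
  have harg : (K / N) * (c / (c / N + 1)) = K * c / (c + N) := by
    have h4 : c / N + 1 ≠ 0 := by positivity
    field_simp
  rw [harg, ← hsdef]
  have h1s : (1:ℝ) + s ≠ 0 := by positivity
  have key : (1 + N / c) * (1 - s ^ 2) = K := by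
    rw [hs2]
    field_simp
    ring
  rw [div_eq_iff h1s]
  linear_combination -key
end
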